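/- Every Q-SOS refutation of the Parity_n formulas has existential Q-degree at least n, and hence Q-size 2^{Ω(n)}. -/
import Mathlib


open MvPolynomial

/-- The rational value of a Boolean. -/
noncomputable def bval (b : Bool) : ℚ := if b then 1 else 0

/-- A Q-SOS refutation of a QBF over variables `Fin n` (in prefix order), with
existential variables marked by `E` and matrix encoded by the polynomials in `P`:
an identity `Σ_{p∈P} q_p·p + Σ_u q_u·(1-2u) + Σ s² + 1 = 0` where each `q_u`
(for universal `u`) only mentions variables left of `u`. -/
structure QSOS (n : ℕ) (E : Fin n → Bool) (P : Finset (MvPolynomial (Fin n) ℚ)) where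
  qp : MvPolynomial (Fin n) ℚ → MvPolynomial (Fin n) ℚ
  qu : Fin n → MvPolynomial (Fin n) ℚ
  sq : Multiset (MvPolynomial (Fin n) ℚ)
  hvars : ∀ u : Fin n, E u = false → ∀ v ∈ (qu u).vars, v < u
  huz : ∀ u : Fin n, E u = true → qu u = 0
  hid : ∑ p ∈ P, qp p * p
      + ∑ u : Fin n, qu u * (1 - 2 * X u)
      + (sq.map fun s => s ^ 2).sum + 1 = 0

/-- Q-size of a Q-SOS refutation: the number of monomials in the `q_u` polynomials. -/
noncomputable def QSOS.qsize {n : ℕ} {E : Fin n → Bool}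
    {P : Finset (MvPolynomial (Fin n) ℚ)} (π : QSOS n E P) : ℕ :=
  ∑ u : Fin n, (π.qu u).support.card

/-- Existential Q-degree of a Q-SOS refutation: the largest number of existential
variables (with multiplicity) in a monomial of some `q_u`. -/
noncomputable def QSOS.exdeg {n : ℕ} {E : Fin n → Bool}
    {P : Finset (MvPolynomial (Fin n) ℚ)} (π : QSOS n E P) : ℕ :=
  Finset.univ.sup fun u : Fin n =>
    (π.qu u).support.sup fun m => ∑ i ∈ Finset.univ.filter (fun i => E i = true), m i

/-! The Parity_n formulas: `∃x₁…x_n ∀u ∃t₁…t_n. (t₁ ↔ x₁) ∧ (u ↮ t_n) ∧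
⋀_{i≥2} (t_i ↔ t_{i-1} ⊕ x_i)`, over variables `Fin (2n+1)` in prefix order:
`x_i` at position `i` (`0 ≤ i < n`), `u` at position `n`, `t_i` at position `n+1+i`. -/

/-- Index of `x_i`. -/
def pxIdx (n : ℕ) (i : Fin n) : Fin (2 * n + 1) := ⟨i, by have := i.isLt; omega⟩

/-- Index of `u`. -/
def puIdx (n : ℕ) : Fin (2 * n + 1) := ⟨n, by omega⟩

/-- Index of `t_i`. -/
def ptIdx (n : ℕ) (i : Fin n) : Fin (2 * n + 1) := ⟨n + 1 + i, by have := i.isLt; omega⟩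

/-- The polynomial encoding the constraint defining `t_i`:
`t₁ ↔ x₁` for `i = 0`, and `t_i ↔ t_{i-1} ⊕ x_i` otherwise. -/
noncomputable def parityConstraint (n : ℕ) (i : Fin n) : MvPolynomial (Fin (2 * n + 1)) ℚ :=
  if (i : ℕ) = 0 then X (ptIdx n i) - X (pxIdx n i)
  else X (ptIdx n i) - (X (ptIdx n ⟨(i : ℕ) - 1, by have := i.isLt; omega⟩) + X (pxIdx n i)
    - 2 * X (ptIdx n ⟨(i : ℕ) - 1, by have := i.isLt; omega⟩) * X (pxIdx n i))

open Classical in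
/-- The polynomial encoding of the matrix of `Parity_n`: the Boolean axioms, the
`t_i`-constraints, and the clause `u ↮ t_n` (encoded as `u + t_n - 1`). -/
noncomputable def parityEnc (n : ℕ) : Finset (MvPolynomial (Fin (2 * n + 1)) ℚ) :=
  (Finset.univ.image fun v : Fin (2 * n + 1) => X v ^ 2 - X v)
    ∪ (Finset.univ.image (parityConstraint n))
    ∪ {X (puIdx n) + X (⟨2 * n, by omega⟩ : Fin (2 * n + 1)) - 1}

/-- The existential variables of `Parity_n`: everything except `u`. -/
def parityE (n : ℕ) (v : Fin (2 * n + 1)) : Bool := !decide ((v : ℕ) = n)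

namespace ParityAux

lemma bval_sq (b : Bool) : bval b ^ 2 = bval b := by cases b <;> simp [bval]

lemma bval_xor (b c : Bool) :
    bval (xor b c) = bval b + bval c - 2 * bval b * bval c := by
  cases b <;> cases c <;> norm_num [bval]

lemma bval_not (b : Bool) : bval (!b) = 1 - bval b := by cases b <;> norm_num [bval]

variable {n : ℕ}

/-- prefix parity of the first `k` values of `σ`. -/
def pfold (σ : Fin n → Bool) : ℕ → Bool
  | 0 => false
  | k + 1 => xor (pfold σ k) (if h : k < n then σ ⟨k, h⟩ else false)

lemma pfold_flip (σ : Fin n → Bool) (i : Fin n) (k : ℕ) :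
    pfold (Function.update σ i (!σ i)) k = if (i : ℕ) < k then !(pfold σ k) else pfold σ k := by
  induction k with
  | zero => simp [pfold]
  | succ k ih =>
    rw [pfold, pfold, ih]
    rcases Nat.lt_or_ge k n with hkn | hkn
    · rw [dif_pos hkn, dif_pos hkn]
      rcases lt_trichotomy (i : ℕ) k with h | h | h
      · rw [if_pos h, if_pos (by omega),
          Function.update_of_ne (by simp only [ne_eq, Fin.ext_iff]; omega)]
        cases pfold σ k <;> simp
      · have hei : (⟨k, hkn⟩ : Fin n) = i := Fin.ext h.symm
        rw [if_neg (by omega), if_pos (by omega), hei, Function.update_self]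
        cases pfold σ k <;> cases σ i <;> simp
      · rw [if_neg (by omega), if_neg (by omega),
          Function.update_of_ne (by simp only [ne_eq, Fin.ext_iff]; omega)]
    · rw [dif_neg (by omega), dif_neg (by omega)]
      have h : (i : ℕ) < k := by have := i.isLt; omega
      rw [if_pos h, if_pos (by omega)]
      cases pfold σ k <;> simp

/-- the countermodel assignment associated with `σ`. -/
noncomputable def asg (σ : Fin n → Bool) (v : Fin (2 * n + 1)) : ℚ :=
  if h : (v : ℕ) < n then bval (σ ⟨v, h⟩)
  else if (v : ℕ) = n then bval (!(pfold σ n))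
  else bval (pfold σ ((v : ℕ) - n))

lemma asg_bval (σ : Fin n → Bool) (v : Fin (2 * n + 1)) : ∃ b, asg σ v = bval b := by
  unfold asg; split_ifs <;> exact ⟨_, rfl⟩

lemma asg_px (σ : Fin n → Bool) (i : Fin n) : asg σ (pxIdx n i) = bval (σ i) := by
  have h : ((pxIdx n i : Fin (2*n+1)) : ℕ) = (i : ℕ) := rfl
  rw [asg]
  rw [dif_pos (h ▸ i.isLt)]
  congr

lemma asg_pu (σ : Fin n → Bool) : asg σ (puIdx n) = bval (!(pfold σ n)) := by
  have h : ((puIdx n : Fin (2*n+1)) : ℕ) = n := rfl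
  rw [asg, dif_neg (by omega), if_pos h]

lemma asg_pt (σ : Fin n → Bool) (i : Fin n) : asg σ (ptIdx n i) = bval (pfold σ ((i:ℕ)+1)) := by
  have h : ((ptIdx n i : Fin (2*n+1)) : ℕ) = n + 1 + (i : ℕ) := rfl
  rw [asg, dif_neg (by omega), if_neg (by omega)]
  rw [h]
  congr 2
  omega

lemma asg_last (σ : Fin n → Bool) (hn : 0 < n) :
    asg σ (⟨2 * n, by omega⟩ : Fin (2 * n + 1)) = bval (pfold σ n) := by
  rw [asg, dif_neg (by simp; omega), if_neg (by simp; omega)]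
  congr 2
  simp
  omega

def sgnQ (b : Bool) : ℚ := if b then 1 else -1

lemma one_sub_two_bval_not (b : Bool) : 1 - 2 * bval (!b) = sgnQ b := by
  cases b <;> norm_num [bval, sgnQ]

end ParityAux

namespace ParityAux

variable {n : ℕ}

lemma eval_constraint (σ : Fin n → Bool) (i : Fin n) :
    MvPolynomial.eval (asg σ) (parityConstraint n i) = 0 := by
  rcases Nat.eq_zero_or_pos (i : ℕ) with h0 | h0
  · rw [parityConstraint, if_pos h0]
    have hn' : 0 < n := by have := i.isLt; omega
    have hi : (⟨0, hn'⟩ : Fin n) = i := Fin.ext h0.symm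
    have hp : pfold σ ((i : ℕ) + 1) = σ i := by
      rw [h0]
      show xor (pfold σ 0) _ = σ i
      rw [dif_pos hn']
      simp [pfold, hi]
    simp only [map_sub, MvPolynomial.eval_X, asg_px, asg_pt, hp, sub_self]
  · rw [parityConstraint, if_neg (by omega)]
    simp only [map_sub, map_add, map_mul, MvPolynomial.eval_X, asg_px, asg_pt, map_ofNat]
    have hlt : (i : ℕ) - 1 + 1 = (i : ℕ) := by omega
    have hstep : pfold σ ((i : ℕ) + 1) = xor (pfold σ (i : ℕ)) (σ i) := by
      show xor (pfold σ (i : ℕ)) _ = _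
      rw [dif_pos i.isLt]
    rw [hlt, hstep, bval_xor]
    ring

lemma eval_enc (σ : Fin n → Bool) (hn : 0 < n) :
    ∀ p ∈ parityEnc n, MvPolynomial.eval (asg σ) p = 0 := by
  intro p hp
  simp only [parityEnc, Finset.mem_union, Finset.mem_image, Finset.mem_univ, true_and,
    Finset.mem_singleton] at hp
  rcases hp with (⟨v, rfl⟩ | ⟨i, rfl⟩) | rfl
  · obtain ⟨b, hb⟩ := asg_bval σ v
    simp [hb, bval_sq]
  · exact eval_constraint σ i
  · simp only [map_sub, map_add, MvPolynomial.eval_X, map_one, asg_pu, asg_last σ hn,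
      bval_not]
    ring

/-- Strategy extraction: at each Boolean countermodel point, the universal `q` polynomial
is forced to have the opposite sign of the parity. -/
lemma stepA {π : QSOS (2 * n + 1) (parityE n) (parityEnc n)} (hn : 0 < n)
    (σ : Fin n → Bool) :
    sgnQ (pfold σ n) * MvPolynomial.eval (asg σ) (π.qu (puIdx n)) ≤ -1 := by
  have h := congrArg (MvPolynomial.eval (asg σ)) π.hid
  simp only [map_add, map_sum, map_mul, map_one, map_zero, map_sub, map_ofNat,
    MvPolynomial.eval_X, map_multiset_sum, Multiset.map_map, Function.comp,
    map_pow] at h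
  rw [Finset.sum_eq_zero (fun p hp => by rw [eval_enc σ hn p hp, mul_zero])] at h
  rw [Finset.sum_eq_single (puIdx n)] at h
  · rw [asg_pu, one_sub_two_bval_not] at h
    have hsq : (0 : ℚ) ≤ (Multiset.map
        (fun s => MvPolynomial.eval (asg σ) s ^ 2) π.sq).sum :=
      Multiset.sum_nonneg (by
        intro x hx
        obtain ⟨s, _, rfl⟩ := Multiset.mem_map.mp hx
        positivity)
    have := h
    nlinarith [mul_comm (MvPolynomial.eval (asg σ) (π.qu (puIdx n))) (sgnQ (pfold σ n))]
  · intro u _ hu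
    have hE : parityE n u = true := by
      simp only [parityE, Bool.not_eq_true', decide_eq_false_iff_not]
      intro hv
      exact hu (Fin.ext hv)
    rw [π.huz u hE, map_zero, zero_mul]
  · intro hmem
    exact absurd (Finset.mem_univ _) hmem

end ParityAux

namespace ParityAux

variable {n : ℕ}

lemma px_inj : ∀ x ∈ (Finset.univ : Finset (Fin n)), ∀ y ∈ Finset.univ,
    pxIdx n x = pxIdx n y → x = y := by
  intro x _ y _ h
  have h2 : ((pxIdx n x : Fin (2 * n + 1)) : ℕ) = ((pxIdx n y : Fin (2 * n + 1)) : ℕ) :=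
    congrArg Fin.val h
  exact Fin.ext h2

lemma supp_lt (π : QSOS (2 * n + 1) (parityE n) (parityEnc n))
    {m : Fin (2 * n + 1) →₀ ℕ} (hm : m ∈ (π.qu (puIdx n)).support)
    (v : Fin (2 * n + 1)) (hv : n ≤ (v : ℕ)) : m v = 0 := by
  by_contra h
  have hE : parityE n (puIdx n) = false := by simp [parityE, puIdx]
  have hvars := π.hvars (puIdx n) hE v
    (MvPolynomial.mem_vars v |>.mpr ⟨m, hm, Finsupp.mem_support_iff.mpr h⟩)
  rw [Fin.lt_def] at hvars
  have : ((puIdx n : Fin (2 * n + 1)) : ℕ) = n := rfl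
  omega

lemma prod_reduce (σ : Fin n → Bool) (m : Fin (2 * n + 1) →₀ ℕ)
    (h0 : ∀ v : Fin (2 * n + 1), n ≤ (v : ℕ) → m v = 0) :
    ∏ v : Fin (2 * n + 1), asg σ v ^ m v = ∏ i : Fin n, bval (σ i) ^ m (pxIdx n i) := by
  rw [← Finset.prod_subset (Finset.subset_univ (Finset.univ.image (pxIdx n)))
    (fun v _ hv => by
      have hvn : n ≤ (v : ℕ) := by
        by_contra hlt
        exact hv (Finset.mem_image.mpr ⟨⟨(v : ℕ), by omega⟩, Finset.mem_univ _, Fin.ext rfl⟩)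
      rw [h0 v hvn, pow_zero]),
    Finset.prod_image px_inj]
  exact Finset.prod_congr rfl fun i _ => by rw [asg_px]

lemma stepB (π : QSOS (2 * n + 1) (parityE n) (parityEnc n)) (hn : 0 < n)
    (S : Finset (Fin n)) :
    ∃ m ∈ (π.qu (puIdx n)).support, ∀ i : Fin n, (m (pxIdx n i) ≠ 0 ↔ i ∈ S) := by
  classical
  by_contra hcon
  push_neg at hcon
  set q := π.qu (puIdx n) with hqdef
  set D : Finset (Fin n → Bool) := Finset.univ.filter (fun σ => ∀ i ∉ S, σ i = false) with hD
  have hDne : (fun _ => false) ∈ D := by simp [hD]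
  have hcard : 0 < D.card := Finset.card_pos.mpr ⟨_, hDne⟩
  have hinner : ∀ m ∈ q.support,
      ∑ σ ∈ D, sgnQ (pfold σ n) * ∏ i : Fin n, bval (σ i) ^ m (pxIdx n i) = 0 := by
    intro m hm
    by_cases hcase : ∃ j, j ∉ S ∧ m (pxIdx n j) ≠ 0
    · obtain ⟨j, hjS, hj⟩ := hcase
      refine Finset.sum_eq_zero fun σ hσ => ?_
      have hjf : σ j = false := (Finset.mem_filter.mp hσ).2 j hjS
      rw [Finset.prod_eq_zero (Finset.mem_univ j)
        (by rw [hjf]; simp [bval, zero_pow hj]), mul_zero]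
    · push_neg at hcase
      obtain ⟨i1, hi1⟩ := hcon m hm
      obtain ⟨hne, hniS⟩ | ⟨hmz, hi1S⟩ := hi1
      · exact absurd (hcase i1 hniS) hne
      refine Finset.sum_involution (fun σ _ => Function.update σ i1 (!σ i1)) ?_ ?_ ?_ ?_
      · intro σ hσ
        have hsgn : sgnQ (pfold (Function.update σ i1 (!σ i1)) n) = -sgnQ (pfold σ n) := by
          rw [pfold_flip, if_pos i1.isLt]
          cases pfold σ n <;> simp [sgnQ]
        have hprod : (∏ i : Fin n, bval (Function.update σ i1 (!σ i1) i) ^ m (pxIdx n i))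
            = ∏ i : Fin n, bval (σ i) ^ m (pxIdx n i) := by
          refine Finset.prod_congr rfl fun i _ => ?_
          by_cases hii : i = i1
          · subst hii; rw [hmz, pow_zero, pow_zero]
          · rw [Function.update_of_ne hii]
        rw [hsgn, hprod]
        ring
      · intro σ _ _ he
        have := congrFun he i1
        simp at this
      · intro σ hσ
        simp only [hD, Finset.mem_filter, Finset.mem_univ, true_and] at hσ ⊢
        intro j hj
        rw [Function.update_of_ne (fun h => hj (by rw [h]; exact hi1S))]
        exact hσ j hj
      · intro σ _
        funext j
        by_cases hji : j = i1
        · subst hji; simp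
        · simp [Function.update_of_ne hji]
  have hzero : ∑ σ ∈ D, sgnQ (pfold σ n) * MvPolynomial.eval (asg σ) q = 0 := by
    have expand : ∀ σ : Fin n → Bool, sgnQ (pfold σ n) * MvPolynomial.eval (asg σ) q
        = ∑ m ∈ q.support, MvPolynomial.coeff m q *
            (sgnQ (pfold σ n) * ∏ i : Fin n, bval (σ i) ^ m (pxIdx n i)) := by
      intro σ
      rw [MvPolynomial.eval_eq', Finset.mul_sum]
      refine Finset.sum_congr rfl fun m hm => ?_
      rw [← prod_reduce σ m (supp_lt π hm)]
      ring
    calc ∑ σ ∈ D, sgnQ (pfold σ n) * MvPolynomial.eval (asg σ) q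
        = ∑ σ ∈ D, ∑ m ∈ q.support, MvPolynomial.coeff m q *
            (sgnQ (pfold σ n) * ∏ i : Fin n, bval (σ i) ^ m (pxIdx n i)) :=
          Finset.sum_congr rfl fun σ _ => expand σ
      _ = ∑ m ∈ q.support, ∑ σ ∈ D, MvPolynomial.coeff m q *
            (sgnQ (pfold σ n) * ∏ i : Fin n, bval (σ i) ^ m (pxIdx n i)) :=
          Finset.sum_comm
      _ = ∑ m ∈ q.support, MvPolynomial.coeff m q *
            ∑ σ ∈ D, sgnQ (pfold σ n) * ∏ i : Fin n, bval (σ i) ^ m (pxIdx n i) := by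
          refine Finset.sum_congr rfl fun m _ => ?_
          rw [Finset.mul_sum]
      _ = 0 := Finset.sum_eq_zero fun m hm => by rw [hinner m hm, mul_zero]
  have hle : ∑ σ ∈ D, sgnQ (pfold σ n) * MvPolynomial.eval (asg σ) q ≤ -1 := by
    calc ∑ σ ∈ D, sgnQ (pfold σ n) * MvPolynomial.eval (asg σ) q
        ≤ ∑ _σ ∈ D, (-1 : ℚ) := Finset.sum_le_sum fun σ _ => stepA hn σ
      _ = -(D.card : ℚ) := by simp
      _ ≤ -1 := by
          have : (1 : ℚ) ≤ (D.card : ℚ) := by exact_mod_cast hcard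
          linarith
  rw [hzero] at hle
  norm_num at hle

lemma support_card (π : QSOS (2 * n + 1) (parityE n) (parityEnc n)) (hn : 0 < n) :
    2 ^ n ≤ (π.qu (puIdx n)).support.card := by
  classical
  choose f hf hiff using stepB π hn
  have hinj : Set.InjOn f (Finset.univ : Finset (Finset (Fin n))) := by
    intro S _ T _ hST
    ext i
    rw [← hiff S i, hST, hiff T i]
  have := Finset.card_le_card_of_injOn f (fun S _ => hf S) hinj
  simpa [Finset.card_univ, Fintype.card_finset] using this

lemma exdeg_ge (π : QSOS (2 * n + 1) (parityE n) (parityEnc n)) (hn : 0 < n) :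
    n ≤ π.exdeg := by
  obtain ⟨m, hm, hiff⟩ := stepB π hn Finset.univ
  have h1 : n ≤ ∑ i ∈ Finset.univ.filter (fun i : Fin (2 * n + 1) => parityE n i = true), m i := by
    have hsub : Finset.univ.image (pxIdx n)
        ⊆ Finset.univ.filter (fun i : Fin (2 * n + 1) => parityE n i = true) := by
      intro v hv
      obtain ⟨i, _, rfl⟩ := Finset.mem_image.mp hv
      simp only [Finset.mem_filter, Finset.mem_univ, true_and, parityE,
        Bool.not_eq_true', decide_eq_false_iff_not]
      have : ((pxIdx n i : Fin (2 * n + 1)) : ℕ) = (i : ℕ) := rfl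
      have := i.isLt
      omega
    calc n = ∑ _i : Fin n, 1 := by simp
      _ ≤ ∑ i : Fin n, m (pxIdx n i) :=
          Finset.sum_le_sum fun i _ => Nat.one_le_iff_ne_zero.mpr ((hiff i).mpr (Finset.mem_univ i))
      _ = ∑ v ∈ Finset.univ.image (pxIdx n), m v := (Finset.sum_image px_inj).symm
      _ ≤ _ := Finset.sum_le_sum_of_subset hsub
  have h2 : (∑ i ∈ Finset.univ.filter (fun i : Fin (2 * n + 1) => parityE n i = true), m i)
      ≤ (π.qu (puIdx n)).support.sup
        (fun m => ∑ i ∈ Finset.univ.filter (fun i : Fin (2 * n + 1) => parityE n i = true), m i) :=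
    Finset.le_sup (f := fun m : Fin (2 * n + 1) →₀ ℕ =>
      ∑ i ∈ Finset.univ.filter (fun i : Fin (2 * n + 1) => parityE n i = true), m i) hm
  have h3 : (π.qu (puIdx n)).support.sup
        (fun m => ∑ i ∈ Finset.univ.filter (fun i : Fin (2 * n + 1) => parityE n i = true), m i)
      ≤ π.exdeg :=
    Finset.le_sup (f := fun u => (π.qu u).support.sup
      (fun m => ∑ i ∈ Finset.univ.filter (fun i : Fin (2 * n + 1) => parityE n i = true), m i))
      (Finset.mem_univ (puIdx n))
  exact le_trans (le_trans h1 h2) h3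

lemma qsize_ge (π : QSOS (2 * n + 1) (parityE n) (parityEnc n)) (hn : 0 < n) :
    2 ^ n ≤ π.qsize :=
  le_trans (support_card π hn)
    (Finset.single_le_sum (f := fun u => (π.qu u).support.card)
      (fun u _ => Nat.zero_le _) (Finset.mem_univ (puIdx n)))

end ParityAux


/-- Every Q-SOS refutation of `Parity_n` has existential Q-degree at least `n`, and
hence Q-size `2^{Ω(n)}`. -/
theorem stmt_14 :
    (∀ n : ℕ, ∀ π : QSOS (2 * n + 1) (parityE n) (parityEnc n), n ≤ π.exdeg) ∧
    ∃ c : ℝ, 0 < c ∧ ∃ N : ℕ, ∀ n : ℕ, N ≤ n →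
      ∀ π : QSOS (2 * n + 1) (parityE n) (parityEnc n),
        Real.exp (c * n) ≤ (π.qsize : ℝ) := by
  constructor
  · intro n π
    rcases Nat.eq_zero_or_pos n with rfl | hn
    · exact Nat.zero_le _
    · exact ParityAux.exdeg_ge π hn
  · refine ⟨Real.log 2, Real.log_pos (by norm_num), 1, fun n hn π => ?_⟩
    have h2 : ((2 : ℝ)) ^ n ≤ (π.qsize : ℝ) := by
      exact_mod_cast ParityAux.qsize_ge π hn
    calc Real.exp (Real.log 2 * n) = (2 : ℝ) ^ n := by
          rw [mul_comm, Real.exp_nat_mul, Real.exp_log (by norm_num)]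
      _ ≤ _ := h2
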